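/- For all integers k, m and positive integer n, |(1/n) Σ_{l=0}^{n−1} ζ_n^{kl} ζ_{2n}^{(n−l)l m}|² = (1/n) Σ_{l=0}^{n−1} ζ_n^{kl} ζ_{2n}^{(n−l)l m} δ^{(n)}_{ml,0}, where δ^{(n)}_{ml,0} = 1 if n divides ml and 0 otherwise. -/

import Mathlib

open Finset Complex

noncomputable def EE (n : ℕ) (a : ℤ) : ℂ := Complex.exp (Real.pi * Complex.I * a / n)

lemma EE_add (n : ℕ) (a b : ℤ) : EE n (a + b) = EE n a * EE n b := by
  rw [EE, EE, EE, ← Complex.exp_add]; congr 1; push_cast; ring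

lemma EE_conj (n : ℕ) (a : ℤ) : (starRingEnd ℂ) (EE n a) = EE n (-a) := by
  rw [EE, EE, ← Complex.exp_conj]; congr 1
  simp only [map_div₀, map_mul, Complex.conj_I, Complex.conj_ofReal, map_intCast,
    map_natCast]
  push_cast; ring

lemma EE_two_n (n : ℕ) (hn : 0 < n) (t : ℤ) : EE n (2 * n * t) = 1 := by
  have hn' : (n : ℂ) ≠ 0 := Nat.cast_ne_zero.mpr hn.ne'
  rw [EE]
  have h : (Real.pi : ℂ) * Complex.I * ((2 * (n : ℤ) * t : ℤ) : ℂ) / n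
      = t * (2 * Real.pi * Complex.I) := by
    push_cast; field_simp
  rw [h, Complex.exp_int_mul_two_pi_mul_I]

lemma EE_pow (n : ℕ) (a : ℤ) (l : ℕ) : EE n (a * l) = (EE n a) ^ l := by
  rw [EE, EE, ← Complex.exp_nat_mul]; congr 1; push_cast; ring

lemma EE_sum (n : ℕ) (hn : 0 < n) (a : ℤ) :
    ∑ l ∈ Finset.range n, EE n (2 * a * l) = if (n : ℤ) ∣ a then (n : ℂ) else 0 := by
  have hn' : (n : ℂ) ≠ 0 := Nat.cast_ne_zero.mpr hn.ne'
  have hπ : (Real.pi : ℂ) ≠ 0 := by exact_mod_cast Real.pi_ne_zero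
  simp_rw [EE_pow n (2 * a)]
  by_cases h : (n : ℤ) ∣ a
  · obtain ⟨b, rfl⟩ := h
    have h1 : EE n (2 * ((n : ℤ) * b)) = 1 := by
      have := EE_two_n n hn b; rw [← this]; congr 1; ring
    simp [h1, if_pos (Dvd.intro b rfl)]
  · have hrn : (EE n (2 * a)) ^ n = 1 := by
      rw [← EE_pow, EE]
      have harg : (Real.pi : ℂ) * Complex.I * ((2 * a * (n : ℕ) : ℤ) : ℂ) / n
          = a * (2 * Real.pi * Complex.I) := by push_cast; field_simp
      rw [harg, Complex.exp_int_mul_two_pi_mul_I]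
    have hr1 : EE n (2 * a) ≠ 1 := by
      rw [EE]
      intro hc
      rw [Complex.exp_eq_one_iff] at hc
      obtain ⟨t, ht⟩ := hc
      apply h
      refine ⟨t, ?_⟩
      have h2 : ((a : ℂ)) = (n : ℂ) * t := by
        field_simp at ht
        have hne : (2 : ℂ) * Real.pi * Complex.I ≠ 0 :=
          mul_ne_zero (mul_ne_zero two_ne_zero hπ) Complex.I_ne_zero
        refine mul_right_cancel₀ hne ?_
        push_cast at ht
        linear_combination (Real.pi * Complex.I) * ht
      exact_mod_cast h2
    rw [geom_sum_eq hr1, hrn, sub_self, zero_div, if_neg h]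

lemma sum_shift (n : ℕ) (hn : 0 < n) (g : ℤ → ℂ)
    (hg : ∀ a b : ℤ, (a : ZMod n) = (b : ZMod n) → g a = g b) (c : ℤ) :
    ∑ l ∈ Finset.range n, g (l + c) = ∑ l ∈ Finset.range n, g l := by
  haveI : NeZero n := ⟨hn.ne'⟩
  have key : ∀ c' : ℤ, ∑ l ∈ Finset.range n, g (l + c')
      = ∑ x : ZMod n, g ((x.val : ℤ) + c') := by
    intro c'
    refine (Finset.sum_nbij' (fun x : ZMod n => x.val) (fun l : ℕ => (l : ZMod n)) ?_ ?_ ?_ ?_ ?_).symm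
    · intro x _; exact Finset.mem_range.mpr (ZMod.val_lt x)
    · intro l _; exact Finset.mem_univ _
    · intro x _; exact ZMod.natCast_rightInverse x
    · intro l hl; exact ZMod.val_cast_of_lt (Finset.mem_range.mp hl)
    · intro x _; rfl
  have h0 := key 0
  simp only [add_zero] at h0
  rw [key c, h0]
  refine Fintype.sum_bijective (Equiv.addRight ((c : ZMod n))) (Equiv.bijective _) _ _ ?_
  intro x
  apply hg
  push_cast
  rw [ZMod.natCast_rightInverse x, ZMod.natCast_rightInverse ((Equiv.addRight ((c : ZMod n))) x)]
  simp [Equiv.coe_addRight]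

lemma abs_sq_eq (z : ℂ) : ((‖z‖)^2 : ℂ) = z * (starRingEnd ℂ) z := by
  rw [Complex.mul_conj]
  exact_mod_cast congrArg (Complex.ofReal) (Complex.sq_norm z)

theorem gauss_sum_abs_sq_identity (k m : ℤ) (n : ℕ) (hn : 0 < n) :
    ((‖(1 / (n : ℂ)) * ∑ l ∈ Finset.range n,
        Complex.exp (2 * Real.pi * Complex.I * (k * l : ℂ) / n) *
          Complex.exp (Real.pi * Complex.I * (((n : ℂ) - l) * l * m) / n)‖)^2 : ℂ) =
      (1 / (n : ℂ)) * ∑ l ∈ Finset.range n,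
        Complex.exp (2 * Real.pi * Complex.I * (k * l : ℂ) / n) *
          Complex.exp (Real.pi * Complex.I * (((n : ℂ) - l) * l * m) / n) *
          (if (n : ℤ) ∣ m * l then 1 else 0) := by
  have hn' : (n : ℂ) ≠ 0 := Nat.cast_ne_zero.mpr hn.ne'
  set p : ℤ → ℤ := fun l => 2 * k * l + ((n : ℤ) - l) * l * m with hp
  set F : ℤ → ℂ := fun l => EE n (p l) with hF
  have hA : ∀ l ∈ Finset.range n,
      Complex.exp (2 * Real.pi * Complex.I * (k * l : ℂ) / n) *
        Complex.exp (Real.pi * Complex.I * (((n : ℂ) - l) * l * m) / n) = F (l : ℤ) := by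
    intro l _
    rw [hF]
    show _ = EE n (p l)
    rw [hp, EE, ← Complex.exp_add]
    congr 1
    push_cast
    ring
  have hper : ∀ a t : ℤ, F (a + (n : ℤ) * t) = F a := by
    intro a t
    obtain ⟨u, hu⟩ := Int.even_mul_succ_self (t - 1)
    have hexp : p (a + (n : ℤ) * t)
        = p a + 2 * (n : ℤ) * (k * t - a * m * t - m * (n : ℤ) * u) := by
      simp only [hp]
      linear_combination (-(m * (n : ℤ) * (n : ℤ))) * hu
    show EE n (p (a + (n : ℤ) * t)) = EE n (p a)
    rw [hexp, EE_add, EE_two_n n hn, mul_one]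
  have hg : ∀ a b : ℤ, (a : ZMod n) = (b : ZMod n) → F a = F b := by
    intro a b hab
    rw [ZMod.intCast_eq_intCast_iff] at hab
    obtain ⟨t, ht⟩ := hab.dvd
    have hb : a = b + (n : ℤ) * (-t) := by linear_combination -ht
    rw [hb, hper]
  rw [Finset.sum_congr rfl hA,
    Finset.sum_congr rfl (fun l hl => by rw [hA l hl] :
      ∀ l ∈ Finset.range n,
        Complex.exp (2 * Real.pi * Complex.I * (k * l : ℂ) / n) *
          Complex.exp (Real.pi * Complex.I * (((n : ℂ) - l) * l * m) / n) *
          (if (n : ℤ) ∣ m * l then 1 else 0)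
        = F (l : ℤ) * (if (n : ℤ) ∣ m * l then 1 else 0))]
  rw [abs_sq_eq]
  have hconj : (starRingEnd ℂ) ((1 / (n : ℂ)) * ∑ l ∈ Finset.range n, F (l : ℤ))
      = (1 / (n : ℂ)) * ∑ l ∈ Finset.range n, EE n (-p (l : ℤ)) := by
    rw [map_mul, map_sum]
    congr 1
    · simp
    · refine Finset.sum_congr rfl fun l _ => ?_
      rw [hF]
      exact EE_conj n (p l)
  rw [hconj]
  have key : (∑ l ∈ Finset.range n, F (l : ℤ)) * (∑ l ∈ Finset.range n, EE n (-p (l : ℤ)))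
      = (n : ℂ) * ∑ j ∈ Finset.range n, F (j : ℤ) * (if (n : ℤ) ∣ m * j then 1 else 0) := by
    calc (∑ l ∈ Finset.range n, F (l : ℤ)) * (∑ l ∈ Finset.range n, EE n (-p (l : ℤ)))
        = ∑ l' ∈ Finset.range n, (∑ l ∈ Finset.range n, F (l : ℤ)) * EE n (-p (l' : ℤ)) := by
          rw [Finset.mul_sum]
      _ = ∑ l' ∈ Finset.range n,
            (∑ j ∈ Finset.range n, F ((j : ℤ) + (l' : ℤ))) * EE n (-p (l' : ℤ)) := by
          refine Finset.sum_congr rfl fun l' _ => ?_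
          rw [sum_shift n hn F hg (l' : ℤ)]
      _ = ∑ l' ∈ Finset.range n, ∑ j ∈ Finset.range n,
            F (j : ℤ) * EE n (2 * (-(m * j)) * (l' : ℤ)) := by
          refine Finset.sum_congr rfl fun l' _ => ?_
          rw [Finset.sum_mul]
          refine Finset.sum_congr rfl fun j _ => ?_
          show EE n (p ((j : ℤ) + (l' : ℤ))) * EE n (-p (l' : ℤ))
              = EE n (p (j : ℤ)) * EE n (2 * (-(m * j)) * (l' : ℤ))
          rw [← EE_add, ← EE_add]
          congr 1
          simp only [hp]
          ring
      _ = ∑ j ∈ Finset.range n, ∑ l' ∈ Finset.range n,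
            F (j : ℤ) * EE n (2 * (-(m * j)) * (l' : ℤ)) := Finset.sum_comm
      _ = ∑ j ∈ Finset.range n, F (j : ℤ) * (if (n : ℤ) ∣ -(m * j) then (n : ℂ) else 0) := by
          refine Finset.sum_congr rfl fun j _ => ?_
          rw [← Finset.mul_sum, EE_sum n hn]
      _ = (n : ℂ) * ∑ j ∈ Finset.range n, F (j : ℤ) * (if (n : ℤ) ∣ m * j then 1 else 0) := by
          rw [Finset.mul_sum]
          refine Finset.sum_congr rfl fun j _ => ?_
          simp only [dvd_neg]
          split_ifs <;> ring
  calc (1 / (n : ℂ) * ∑ l ∈ Finset.range n, F (l : ℤ)) *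
        (1 / (n : ℂ) * ∑ l ∈ Finset.range n, EE n (-p (l : ℤ)))
      = (1 / (n : ℂ)) * (1 / (n : ℂ)) *
        ((∑ l ∈ Finset.range n, F (l : ℤ)) * (∑ l ∈ Finset.range n, EE n (-p (l : ℤ)))) := by
        ring
    _ = (1 / (n : ℂ)) * (1 / (n : ℂ)) *
        ((n : ℂ) * ∑ j ∈ Finset.range n, F (j : ℤ) * (if (n : ℤ) ∣ m * j then 1 else 0)) := by
        rw [key]
    _ = (1 / (n : ℂ)) * ∑ j ∈ Finset.range n,
          F (j : ℤ) * (if (n : ℤ) ∣ m * j then 1 else 0) := by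
        field_simp
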